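/- arXiv:1910.04284 — 4 statements merged into one kernel-verified Lean document; each statement's English description precedes it below -/
import Mathlib

section
/- Let F = f_k ∘ ⋯ ∘ f_1 and F̂ = f̂_k ∘ ⋯ ∘ f̂_1 be two compositions of functions between normed spaces, where the perturbed output F(x, δ) is defined recursively by h_1(x,δ) = f_1(x) + δ_1‖x‖, h_i(x,δ) = f_i(h_{i-1}(x,δ)) + δ_i‖h_{i-1}(x,δ)‖, and the all-layer margin m_F(x,y) is the minimum of √(Σ_i ‖δ_i‖²) over all perturbations δ = (δ_1,…,δ_k) causing F(x,δ) to misclassify (x,y). Then for any input-label pair (x,y), |m_F(x,y) − m_{F̂}(x,y)| ≤ √(Σ_{i=1}^k ⦀f_i − f̂_i⦀²), where ⦀g⦀ = sup_{x≠0} ‖g(x)‖/‖x‖. -/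
open scoped BigOperators

/-- Perturbed forward pass: `h_0 = x`, `h_{i+1} = f_i(h_i) + ‖h_i‖ • δ_i`. -/
noncomputable def perturbed {D : ℕ → Type*} [∀ i, NormedAddCommGroup (D i)]
    [∀ i, NormedSpace ℝ (D i)]
    (f : ∀ i, D i → D (i + 1)) (δ : ∀ i, D (i + 1)) (x : D 0) : ∀ i, D i
  | 0 => x
  | (i + 1) => f i (perturbed f δ x i) + ‖perturbed f δ x i‖ • δ i

/-- The set of values `√(Σ_i ‖δ_i‖²)` over perturbations `δ` that cause the
perturbed network output to misclassify `(x, y)` (argmax of the output ≠ y). -/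
noncomputable def marginSet {k l : ℕ} {D : ℕ → Type*} [∀ i, NormedAddCommGroup (D i)]
    [∀ i, NormedSpace ℝ (D i)]
    (f : ∀ i, D i → D (i + 1)) (e : D k ≃ₗᵢ[ℝ] EuclideanSpace ℝ (Fin l))
    (x : D 0) (y : Fin l) : Set ℝ :=
  {r | ∃ δ : ∀ i, D (i + 1),
        (∃ y' : Fin l, y' ≠ y ∧
          e (perturbed f δ x k) y ≤ e (perturbed f δ x k) y') ∧
        r = Real.sqrt (∑ i : Fin k, ‖δ (i : ℕ)‖ ^ 2)}

/-- Minkowski inequality for finite Euclidean sums. -/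
lemma sqrt_sum_sq_add_le {k : ℕ} (a b : Fin k → ℝ) :
    Real.sqrt (∑ i, (a i + b i) ^ 2) ≤
      Real.sqrt (∑ i, a i ^ 2) + Real.sqrt (∑ i, b i ^ 2) := by
  have h := norm_add_le (WithLp.toLp 2 a : EuclideanSpace ℝ (Fin k)) (WithLp.toLp 2 b)
  simpa [EuclideanSpace.norm_eq, Real.norm_eq_abs, sq_abs] using h

lemma exists_margin_le {k l : ℕ} {D : ℕ → Type*} [∀ i, NormedAddCommGroup (D i)]
    [∀ i, NormedSpace ℝ (D i)]
    (f fhat : ∀ i, D i → D (i + 1)) (e : D k ≃ₗᵢ[ℝ] EuclideanSpace ℝ (Fin l))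
    (C : Fin k → ℝ)
    (hC : ∀ (i : Fin k) (h : D i), ‖f i h - fhat i h‖ ≤ C i * ‖h‖)
    (x : D 0) (y : Fin l) (r : ℝ) (hr : r ∈ marginSet fhat e x y) :
    ∃ r' ∈ marginSet f e x y, r' ≤ r + Real.sqrt (∑ i : Fin k, C i ^ 2) := by
  obtain ⟨δ, hmis, rfl⟩ := hr
  set h : ∀ i, D i := perturbed fhat δ x with hh
  set δ' : ∀ i, D (i + 1) := fun i =>
    if hik : i < k then δ i + (‖h i‖)⁻¹ • (fhat i (h i) - f i (h i)) else δ i with hδ'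
  have key : ∀ i, i ≤ k → perturbed f δ' x i = h i := by
    intro i
    induction i with
    | zero => intro _; rfl
    | succ i ih =>
      intro hik
      have hik' : i < k := hik
      have hIH := ih (le_of_lt hik')
      have hδ'i : δ' i = δ i + (‖h i‖)⁻¹ • (fhat i (h i) - f i (h i)) := by
        simp [hδ', hik']
      show f i (perturbed f δ' x i) + ‖perturbed f δ' x i‖ • δ' i = h (i + 1)
      rw [hIH, hδ'i]
      show f i (h i) + ‖h i‖ • (δ i + (‖h i‖)⁻¹ • (fhat i (h i) - f i (h i)))
          = fhat i (h i) + ‖h i‖ • δ i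
      by_cases hz : h i = 0
      · have h0 : f i (0 : D i) = fhat i 0 := by
          have hle := hC ⟨i, hik'⟩ 0
          simp only [norm_zero, mul_zero] at hle
          have := le_antisymm hle (norm_nonneg _)
          rwa [norm_eq_zero, sub_eq_zero] at this
        rw [hz]
        simp [h0]
      · rw [smul_add, smul_smul, mul_inv_cancel₀ (norm_ne_zero_iff.mpr hz), one_smul]
        abel
  have hmem : Real.sqrt (∑ i : Fin k, ‖δ' (i : ℕ)‖ ^ 2) ∈ marginSet f e x y := by
    refine ⟨δ', ?_, rfl⟩
    rw [key k le_rfl]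
    exact hmis
  refine ⟨_, hmem, ?_⟩
  have hb : ∀ i : Fin k, ‖δ' (i : ℕ)‖ ≤ ‖δ (i : ℕ)‖ + |C i| := by
    intro i
    have hik : (i : ℕ) < k := i.isLt
    have hδ'i : δ' (i : ℕ) = δ (i : ℕ) +
        (‖h (i : ℕ)‖)⁻¹ • (fhat (i : ℕ) (h (i : ℕ)) - f (i : ℕ) (h (i : ℕ))) := by
      simp [hδ', hik]
    rw [hδ'i]
    have h1 : ‖(‖h (i : ℕ)‖)⁻¹ • (fhat (i : ℕ) (h (i : ℕ)) - f (i : ℕ) (h (i : ℕ)))‖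
        ≤ |C i| := by
      rw [norm_smul, norm_inv, norm_norm]
      have hC' : ‖fhat (i : ℕ) (h (i : ℕ)) - f (i : ℕ) (h (i : ℕ))‖
          ≤ C i * ‖h (i : ℕ)‖ := by
        rw [norm_sub_rev]
        exact hC i (h (i : ℕ))
      calc (‖h (i : ℕ)‖)⁻¹ * ‖fhat (i : ℕ) (h (i : ℕ)) - f (i : ℕ) (h (i : ℕ))‖
          ≤ (‖h (i : ℕ)‖)⁻¹ * (C i * ‖h (i : ℕ)‖) :=
            mul_le_mul_of_nonneg_left hC' (inv_nonneg.mpr (norm_nonneg _))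
        _ = C i * ((‖h (i : ℕ)‖)⁻¹ * ‖h (i : ℕ)‖) := by ring
        _ ≤ |C i| := by
            by_cases hz : h (i : ℕ) = 0
            · simp [hz, abs_nonneg]
            · rw [inv_mul_cancel₀ (norm_ne_zero_iff.mpr hz), mul_one]
              exact le_abs_self _
    exact (norm_add_le _ _).trans (add_le_add le_rfl h1)
  calc Real.sqrt (∑ i : Fin k, ‖δ' (i : ℕ)‖ ^ 2)
      ≤ Real.sqrt (∑ i : Fin k, (‖δ (i : ℕ)‖ + |C i|) ^ 2) := by
        apply Real.sqrt_le_sqrt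
        exact Finset.sum_le_sum fun i _ => pow_le_pow_left₀ (norm_nonneg _) (hb i) 2
    _ ≤ Real.sqrt (∑ i : Fin k, ‖δ (i : ℕ)‖ ^ 2) + Real.sqrt (∑ i : Fin k, |C i| ^ 2) :=
        sqrt_sum_sq_add_le _ _
    _ = Real.sqrt (∑ i : Fin k, ‖δ (i : ℕ)‖ ^ 2) + Real.sqrt (∑ i : Fin k, C i ^ 2) := by
        simp [sq_abs]

/-- The all-layer margin is `√(Σ ⦀f_i − f̂_i⦀²)`-Lipschitz in the layers: for any two
compositions `F, F̂` and any `(x,y)`, `|m_F(x,y) − m_{F̂}(x,y)| ≤ √(Σ_i ⦀f_i − f̂_i⦀²)`,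
where `C i` bounds the operator-style norm `⦀f_i − f̂_i⦀` (i.e. `‖f_i h − f̂_i h‖ ≤ C i ‖h‖`),
and the minima defining the margins are assumed attained (`IsLeast`). -/
theorem allLayerMargin_lipschitz {k l : ℕ} {D : ℕ → Type*} [∀ i, NormedAddCommGroup (D i)]
    [∀ i, NormedSpace ℝ (D i)]
    (f fhat : ∀ i, D i → D (i + 1)) (e : D k ≃ₗᵢ[ℝ] EuclideanSpace ℝ (Fin l))
    (C : Fin k → ℝ)
    (hC : ∀ (i : Fin k) (h : D i), ‖f i h - fhat i h‖ ≤ C i * ‖h‖)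
    (x : D 0) (y : Fin l) (mF mFhat : ℝ)
    (hmF : IsLeast (marginSet f e x y) mF)
    (hmFhat : IsLeast (marginSet fhat e x y) mFhat) :
    |mF - mFhat| ≤ Real.sqrt (∑ i : Fin k, C i ^ 2) := by
  rw [abs_sub_le_iff]
  constructor
  · obtain ⟨r', hr', hle⟩ := exists_margin_le f fhat e C hC x y mFhat hmFhat.1
    have := hmF.2 hr'
    linarith
  · obtain ⟨r', hr', hle⟩ := exists_margin_le fhat f e C
      (fun i hx => by rw [norm_sub_rev]; exact hC i hx) x y mF hmF.1
    have := hmFhat.2 hr'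
    linarith
end

section
/- Let F_1,…,F_k be function classes each satisfying log N_{⦀·⦀}(ε, F_i) ≤ ⌊C_i²/ε²⌋ for all ε > 0. Fix weights α_i > 0 and p ≥ 1, and on sequences F = (f_1,…,f_k) define the norm ⦀F⦀_α = ‖(α_1⦀f_1⦀,…,α_k⦀f_k⦀)‖_p. Define C_α = (Σ_i α_i^{2p/(p+2)} C_i^{2p/(p+2)})^{(p+2)/(2p)}. Then for all ε > 0, the covering number of the product class F = F_1 × ⋯ × F_k in the norm ⦀·⦀_α satisfies log N(ε, F) ≤ ⌊C_α²/ε²⌋. -/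
open scoped BigOperators

/-- Covering of a product of layer classes in the weighted norm
`⦀F⦀_α = ‖(α_1⦀f_1⦀, …, α_k⦀f_k⦀)‖_p`: if `log N(ε, F_i) ≤ ⌊C_i²/ε²⌋` in the operator
norm for every `ε > 0`, then for every `ε > 0` the product class has an `ε`-cover in
`⦀·⦀_α` of log-cardinality at most `⌊C_α²/ε²⌋`, where
`C_α = (Σ_i α_i^{2p/(p+2)} C_i^{2p/(p+2)})^{(p+2)/(2p)}`. Here the bound
`⦀f_i − g_i⦀ ≤ t_i` is encoded as `∀ x, ‖f_i x − g_i x‖ ≤ t_i ‖x‖`. -/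
theorem productClass_cover {k : ℕ} {E V : Fin k → Type*}
    [∀ i, NormedAddCommGroup (E i)] [∀ i, NormedAddCommGroup (V i)]
    (Fc : ∀ i, Set (E i → V i)) (C : Fin k → ℝ) (hC : ∀ i, 0 ≤ C i)
    (α : Fin k → ℝ) (hα : ∀ i, 0 < α i) (p : ℝ) (hp : 1 ≤ p)
    (hcov : ∀ (i : Fin k) (εi : ℝ), 0 < εi →
      ∃ T : Finset (E i → V i),
        (∀ g ∈ Fc i, ∃ ghat ∈ T, ∀ x, ‖g x - ghat x‖ ≤ εi * ‖x‖) ∧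
        Real.log T.card ≤ (Nat.floor (C i ^ 2 / εi ^ 2) : ℝ)) :
    ∀ ε : ℝ, 0 < ε →
      ∃ G : Finset (∀ i, E i → V i),
        (∀ f : ∀ i, E i → V i, (∀ i, f i ∈ Fc i) →
          ∃ g ∈ G, ∃ t : Fin k → ℝ, (∀ i, 0 ≤ t i) ∧
            (∀ (i : Fin k) (x : E i), ‖f i x - g i x‖ ≤ t i * ‖x‖) ∧
            (∑ i, (α i * t i) ^ p) ^ (1 / p) ≤ ε) ∧
        Real.log G.card ≤
          (Nat.floor (((∑ i, α i ^ (2 * p / (p + 2)) * C i ^ (2 * p / (p + 2))) ^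
              ((p + 2) / (2 * p))) ^ (2 : ℕ) / ε ^ 2) : ℝ) := by
  intro ε hε
  by_cases hne : ∀ i, (Fc i).Nonempty
  case neg =>
    refine ⟨∅, ?_, ?_⟩
    · intro f hf
      push_neg at hne
      obtain ⟨j, hj⟩ := hne
      have := hf j
      rw [hj] at this
      exact this.elim
    · simp
  case pos =>
  have hp0 : 0 < p := lt_of_lt_of_le one_pos hp
  have hp2 : 0 < p + 2 := by linarith
  set q : ℝ := 2 * p / (p + 2) with hq_def
  have hq : 0 < q := by positivity
  set u : ℝ := 2 / (p + 2) with hu_def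
  have hu : 0 < u := by positivity
  set S : ℝ := ∑ i, α i ^ q * C i ^ q with hS_def
  have hterm_nonneg : ∀ i, 0 ≤ α i ^ q * C i ^ q := fun i =>
    mul_nonneg (Real.rpow_nonneg (hα i).le _) (Real.rpow_nonneg (hC i) _)
  have hS0 : 0 ≤ S := Finset.sum_nonneg fun i _ => hterm_nonneg i
  set Cα : ℝ := S ^ ((p + 2) / (2 * p)) with hCα_def
  have hCα0 : 0 ≤ Cα := Real.rpow_nonneg hS0 _
  have hCαq : Cα ^ q = S := by
    rw [hCα_def, ← Real.rpow_mul hS0]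
    rw [show (p + 2) / (2 * p) * q = 1 by rw [hq_def]; field_simp]
    exact Real.rpow_one S
  set δ : Fin k → ℝ := fun i => ε * (C i * α i / Cα) ^ u * (α i)⁻¹ with hδ_def
  have hδ0 : ∀ i, 0 ≤ δ i := fun i =>
    mul_nonneg (mul_nonneg hε.le (Real.rpow_nonneg
      (div_nonneg (mul_nonneg (hC i) (hα i).le) hCα0) _)) (inv_nonneg.2 (hα i).le)
  have hSpos : ∀ i, 0 < C i → 0 < S := by
    intro i hCi
    refine Finset.sum_pos' (fun j _ => hterm_nonneg j) ⟨i, Finset.mem_univ i, ?_⟩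
    exact mul_pos (Real.rpow_pos_of_pos (hα i) _) (Real.rpow_pos_of_pos hCi _)
  have hδpos : ∀ i, 0 < C i → 0 < δ i := by
    intro i hCi
    have hCαp : 0 < Cα := Real.rpow_pos_of_pos (hSpos i hCi) _
    exact mul_pos (mul_pos hε (Real.rpow_pos_of_pos
      (div_pos (mul_pos hCi (hα i)) hCαp) _)) (inv_pos.2 (hα i))
  -- per-index covers at scale δ i
  have hcov' : ∀ i, ∃ T : Finset (E i → V i), T.Nonempty ∧
      (∀ g ∈ Fc i, ∃ ghat ∈ T, ∀ x, ‖g x - ghat x‖ ≤ δ i * ‖x‖) ∧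
      Real.log T.card ≤ (Nat.floor (C i ^ 2 / (δ i) ^ 2) : ℝ) := by
    intro i
    rcases (hδ0 i).lt_or_eq with hpos | hzero
    · obtain ⟨T, hT1, hT2⟩ := hcov i (δ i) hpos
      obtain ⟨g0, hg0⟩ := hne i
      obtain ⟨gh, hghT, _⟩ := hT1 g0 hg0
      exact ⟨T, ⟨gh, hghT⟩, hT1, hT2⟩
    · have hCi : C i = 0 := by
        by_contra h
        have h1 := hδpos i (lt_of_le_of_ne (hC i) (Ne.symm h))
        linarith [hzero]
      obtain ⟨g0, hg0⟩ := hne i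
      refine ⟨{g0}, ⟨g0, Finset.mem_singleton_self g0⟩, ?_, ?_⟩
      · intro g hg
        refine ⟨g0, Finset.mem_singleton_self g0, fun x => ?_⟩
        have key : ‖g x - g0 x‖ ≤ 0 := by
          refine le_of_forall_pos_le_add ?_
          intro η hη
          have hx1 : (0:ℝ) < ‖x‖ + 1 := by positivity
          have hη' : 0 < η / (2 * (‖x‖ + 1)) := by positivity
          obtain ⟨T, hT1, hT2⟩ := hcov i _ hη'
          have hcard : T.card ≤ 1 := by
            by_contra hgt
            push_neg at hgt
            have h1 : (1:ℝ) < T.card := by exact_mod_cast hgt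
            have h2 := Real.log_pos h1
            rw [hCi] at hT2
            norm_num at hT2
            linarith
          obtain ⟨gh, hghT, hgb⟩ := hT1 g hg
          obtain ⟨gh0, hgh0T, hg0b⟩ := hT1 g0 hg0
          have hgheq : gh = gh0 := Finset.card_le_one.mp hcard _ hghT _ hgh0T
          have tri : ‖g x - g0 x‖ ≤ ‖g x - gh x‖ + ‖g0 x - gh0 x‖ := by
            rw [hgheq]
            have hrw : g x - g0 x = (g x - gh0 x) - (g0 x - gh0 x) := by abel
            rw [hrw]
            exact norm_sub_le _ _
          have hb1 := hgb x
          have hb2 := hg0b x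
          have hxle : ‖x‖ ≤ ‖x‖ + 1 := by linarith
          have hfin : 2 * (η / (2 * (‖x‖ + 1))) * (‖x‖ + 1) = η := by
            field_simp
          nlinarith [norm_nonneg x]
        have : ‖g x - g0 x‖ = 0 := le_antisymm key (norm_nonneg _)
        rw [this]
        positivity
      · simp
  choose T hTne hTcov hTlog using hcov'
  -- key per-index identities
  have hδeq : ∀ i, 0 < C i → Real.log (δ i) =
      Real.log ε + u * (Real.log (C i) + Real.log (α i) - Real.log Cα) - Real.log (α i) := by
    intro i hCi
    have hSp : 0 < S := hSpos i hCi
    have hCαp : 0 < Cα := Real.rpow_pos_of_pos hSp _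
    have hw : 0 < C i * α i / Cα := div_pos (mul_pos hCi (hα i)) hCαp
    simp only [hδ_def]
    rw [Real.log_mul (mul_pos hε (Real.rpow_pos_of_pos hw u)).ne' (inv_pos.2 (hα i)).ne',
      Real.log_mul hε.ne' (Real.rpow_pos_of_pos hw u).ne', Real.log_rpow hw,
      Real.log_inv, Real.log_div (mul_pos hCi (hα i)).ne' hCαp.ne',
      Real.log_mul hCi.ne' (hα i).ne']
    ring
  have hCαeq : ∀ (_ : 0 < S), Real.log Cα = (p + 2) / (2 * p) * Real.log S := by
    intro hSp
    rw [hCα_def, Real.log_rpow hSp]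
  have hkey1 : ∀ i, (α i * δ i) ^ p = ε ^ p * (α i ^ q * C i ^ q) / S := by
    intro i
    rcases (hC i).lt_or_eq with hCi | hCi
    · have hSp : 0 < S := hSpos i hCi
      have hCαp : 0 < Cα := Real.rpow_pos_of_pos hSp _
      have hδp : 0 < δ i := hδpos i hCi
      have haq : 0 < α i ^ q := Real.rpow_pos_of_pos (hα i) _
      have hcq : 0 < C i ^ q := Real.rpow_pos_of_pos hCi _
      have hL : 0 < (α i * δ i) ^ p := Real.rpow_pos_of_pos (mul_pos (hα i) hδp) _
      have hR : 0 < ε ^ p * (α i ^ q * C i ^ q) / S :=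
        div_pos (mul_pos (Real.rpow_pos_of_pos hε p) (mul_pos haq hcq)) hSp
      rw [← Real.exp_log hL, ← Real.exp_log hR]
      congr 1
      rw [Real.log_rpow (mul_pos (hα i) hδp), Real.log_mul (hα i).ne' hδp.ne',
        Real.log_div (mul_pos (Real.rpow_pos_of_pos hε p) (mul_pos haq hcq)).ne' hSp.ne',
        Real.log_mul (Real.rpow_pos_of_pos hε p).ne' (mul_pos haq hcq).ne',
        Real.log_mul haq.ne' hcq.ne', Real.log_rpow hε, Real.log_rpow (hα i),
        Real.log_rpow hCi, hδeq i hCi, hCαeq hSp, hu_def, hq_def]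
      field_simp
      ring
    · have hδz : δ i = 0 := by
        simp only [hδ_def]
        rw [← hCi]
        simp [Real.zero_rpow hu.ne']
      rw [hδz, mul_zero, Real.zero_rpow hp0.ne', ← hCi, Real.zero_rpow hq.ne']
      simp
  have hkey2 : ∀ i, C i ^ 2 / δ i ^ 2 = Cα ^ 2 / ε ^ 2 * (α i ^ q * C i ^ q) / S := by
    intro i
    rcases (hC i).lt_or_eq with hCi | hCi
    · have hSp : 0 < S := hSpos i hCi
      have hCαp : 0 < Cα := Real.rpow_pos_of_pos hSp _
      have hδp : 0 < δ i := hδpos i hCi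
      have haq : 0 < α i ^ q := Real.rpow_pos_of_pos (hα i) _
      have hcq : 0 < C i ^ q := Real.rpow_pos_of_pos hCi _
      have hL : 0 < C i ^ 2 / δ i ^ 2 := div_pos (pow_pos hCi 2) (pow_pos hδp 2)
      have hR : 0 < Cα ^ 2 / ε ^ 2 * (α i ^ q * C i ^ q) / S :=
        div_pos (mul_pos (div_pos (pow_pos hCαp 2) (pow_pos hε 2)) (mul_pos haq hcq)) hSp
      rw [← Real.exp_log hL, ← Real.exp_log hR]
      congr 1
      rw [Real.log_div (pow_ne_zero 2 hCi.ne') (pow_ne_zero 2 hδp.ne'),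
        Real.log_div (mul_pos (div_pos (pow_pos hCαp 2) (pow_pos hε 2))
          (mul_pos haq hcq)).ne' hSp.ne',
        Real.log_mul (div_pos (pow_pos hCαp 2) (pow_pos hε 2)).ne' (mul_pos haq hcq).ne',
        Real.log_div (pow_ne_zero 2 hCαp.ne') (pow_ne_zero 2 hε.ne'),
        Real.log_mul haq.ne' hcq.ne', Real.log_rpow (hα i), Real.log_rpow hCi,
        Real.log_pow, Real.log_pow, Real.log_pow, hδeq i hCi, hCαeq hSp, hu_def, hq_def]
      simp only [Real.log_pow]
      push_cast
      field_simp
      ring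
    · rw [← hCi]
      simp [Real.zero_rpow hq.ne']
  refine ⟨Fintype.piFinset T, ?_, ?_⟩
  · intro f hf
    choose ghat hghat hbound using fun i => hTcov i (f i) (hf i)
    refine ⟨ghat, Fintype.mem_piFinset.2 hghat, δ, hδ0, hbound, ?_⟩
    have hsum : ∑ i, (α i * δ i) ^ p ≤ ε ^ p := by
      calc ∑ i, (α i * δ i) ^ p = ∑ i, ε ^ p * (α i ^ q * C i ^ q) / S :=
            Finset.sum_congr rfl fun i _ => hkey1 i
        _ = ε ^ p * S / S := by rw [← Finset.sum_div, ← Finset.mul_sum]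
        _ ≤ ε ^ p := by
            rcases hS0.lt_or_eq with h | h
            · rw [mul_div_assoc, div_self h.ne', mul_one]
            · rw [← h]
              simp [Real.rpow_nonneg hε.le]
    have h1p : (0:ℝ) ≤ 1 / p := by positivity
    calc (∑ i, (α i * δ i) ^ p) ^ (1 / p) ≤ (ε ^ p) ^ (1 / p) :=
          Real.rpow_le_rpow (Finset.sum_nonneg fun i _ =>
            Real.rpow_nonneg (mul_nonneg (hα i).le (hδ0 i)) p) hsum h1p
      _ = ε := by
          rw [← Real.rpow_mul hε.le, mul_one_div_cancel hp0.ne', Real.rpow_one]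
  · -- log bound
    have hx_nonneg : ∀ i, 0 ≤ C i ^ 2 / δ i ^ 2 := fun i =>
      div_nonneg (pow_nonneg (hC i) 2) (pow_nonneg (hδ0 i) 2)
    have hcardpos : ∀ i, (0:ℝ) < (T i).card := fun i => by
      exact_mod_cast Finset.card_pos.2 (hTne i)
    have hlogsum : Real.log (Fintype.piFinset T).card = ∑ i, Real.log (T i).card := by
      rw [Fintype.card_piFinset]
      push_cast
      exact Real.log_prod fun i _ => (hcardpos i).ne'
    rw [hlogsum]
    have hsum2 : ∑ i, C i ^ 2 / δ i ^ 2 ≤ Cα ^ 2 / ε ^ 2 := by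
      calc ∑ i, C i ^ 2 / δ i ^ 2 = ∑ i, Cα ^ 2 / ε ^ 2 * (α i ^ q * C i ^ q) / S :=
            Finset.sum_congr rfl fun i _ => hkey2 i
        _ = Cα ^ 2 / ε ^ 2 * S / S := by rw [← Finset.sum_div, ← Finset.mul_sum]
        _ ≤ Cα ^ 2 / ε ^ 2 := by
            rcases hS0.lt_or_eq with h | h
            · rw [mul_div_assoc, div_self h.ne', mul_one]
            · rw [← h]
              simp
              positivity
    have hN : ((∑ i, Nat.floor (C i ^ 2 / δ i ^ 2) : ℕ) : ℝ) ≤ Cα ^ 2 / ε ^ 2 := by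
      push_cast
      refine le_trans (Finset.sum_le_sum fun i _ => Nat.floor_le (hx_nonneg i)) hsum2
    have hNle : (∑ i, Nat.floor (C i ^ 2 / δ i ^ 2) : ℕ) ≤ Nat.floor (Cα ^ 2 / ε ^ 2) :=
      Nat.le_floor hN
    calc ∑ i, Real.log (T i).card ≤ ∑ i, ((Nat.floor (C i ^ 2 / δ i ^ 2) : ℕ) : ℝ) :=
          Finset.sum_le_sum fun i _ => hTlog i
      _ = ((∑ i, Nat.floor (C i ^ 2 / δ i ^ 2) : ℕ) : ℝ) := by push_cast; rfl
      _ ≤ ((Nat.floor (Cα ^ 2 / ε ^ 2) : ℕ) : ℝ) := by exact_mod_cast hNle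
end

section
/- Fix positive reals z_1,…,z_k, b_1,…,b_k and an integer q > 0. Define E(α) = Σ_i z_i^q/α_i^q + (Σ_i α_i^{2q/(3q−2)} b_i^{2q/(3q−2)})^{(3q−2)/q} over α ∈ (0,∞)^k. Then inf_α E(α) ≤ 2(Σ_i (z_i b_i)^{2/3})^{3q/(q+2)}. -/
open scoped BigOperators

private lemma rpow_pow' (x : ℝ) (hx : 0 ≤ x) (e : ℝ) (q : ℕ) :
    (x ^ e) ^ q = x ^ (e * q) := by
  rw [← Real.rpow_natCast (x ^ e) q, ← Real.rpow_mul hx]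

private lemma rpow_rpow' (x : ℝ) (hx : 0 ≤ x) (e f : ℝ) :
    (x ^ e) ^ f = x ^ (e * f) := (Real.rpow_mul hx e f).symm

/-- For positive reals `z_i, b_i` and integer `q > 0`, the infimum over positive `α` of
`E(α) = Σ_i z_i^q/α_i^q + (Σ_i α_i^{2q/(3q−2)} b_i^{2q/(3q−2)})^{(3q−2)/q}`
is at most `2 (Σ_i (z_i b_i)^{2/3})^{3q/(q+2)}`. -/
theorem inf_E_le {k : ℕ} (z b : Fin k → ℝ) (hz : ∀ i, 0 < z i) (hb : ∀ i, 0 < b i)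
    (q : ℕ) (hq : 0 < q) :
    sInf {r : ℝ | ∃ α : Fin k → ℝ, (∀ i, 0 < α i) ∧
        r = (∑ i, z i ^ q / α i ^ q) +
          (∑ i, α i ^ (2 * (q : ℝ) / (3 * (q : ℝ) - 2)) *
            b i ^ (2 * (q : ℝ) / (3 * (q : ℝ) - 2))) ^ ((3 * (q : ℝ) - 2) / (q : ℝ))}
      ≤ 2 * (∑ i, (z i * b i) ^ ((2 : ℝ) / 3)) ^ (3 * (q : ℝ) / ((q : ℝ) + 2)) := by
  have hqr : (1:ℝ) ≤ (q:ℝ) := by exact_mod_cast hq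
  have hq0 : (0:ℝ) < (q:ℝ) := by linarith
  have h3q2 : (0:ℝ) < 3 * (q:ℝ) - 2 := by linarith
  have hbdd : BddBelow {r : ℝ | ∃ α : Fin k → ℝ, (∀ i, 0 < α i) ∧
        r = (∑ i, z i ^ q / α i ^ q) +
          (∑ i, α i ^ (2 * (q : ℝ) / (3 * (q : ℝ) - 2)) *
            b i ^ (2 * (q : ℝ) / (3 * (q : ℝ) - 2))) ^ ((3 * (q : ℝ) - 2) / (q : ℝ))} := by
    refine ⟨0, fun r hr => ?_⟩
    obtain ⟨α, hα, rfl⟩ := hr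
    have h1 : 0 ≤ ∑ i, z i ^ q / α i ^ q :=
      Finset.sum_nonneg fun i _ => by have := hz i; have := hα i; positivity
    have h2 : 0 ≤ (∑ i, α i ^ (2 * (q : ℝ) / (3 * (q : ℝ) - 2)) *
        b i ^ (2 * (q : ℝ) / (3 * (q : ℝ) - 2))) ^ ((3 * (q : ℝ) - 2) / (q : ℝ)) := by
      apply Real.rpow_nonneg
      exact Finset.sum_nonneg fun i _ => by
        have := (hα i).le; have := (hb i).le; positivity
    linarith
  rcases Nat.eq_zero_or_pos k with hk | hk
  · subst hk
    have hmem : (0:ℝ) ∈ {r : ℝ | ∃ α : Fin 0 → ℝ, (∀ i, 0 < α i) ∧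
        r = (∑ i, z i ^ q / α i ^ q) +
          (∑ i, α i ^ (2 * (q : ℝ) / (3 * (q : ℝ) - 2)) *
            b i ^ (2 * (q : ℝ) / (3 * (q : ℝ) - 2))) ^ ((3 * (q : ℝ) - 2) / (q : ℝ))} := by
      refine ⟨fun i => 1, fun i => one_pos, ?_⟩
      simp [Real.zero_rpow (by positivity : (3 * (q:ℝ) - 2) / (q:ℝ) ≠ 0)]
    have h := csInf_le hbdd hmem
    have hrhs : (0:ℝ) ≤ 2 * (∑ i : Fin 0, (z i * b i) ^ ((2 : ℝ) / 3)) ^ (3 * (q : ℝ) / ((q : ℝ) + 2)) := by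
      have := Real.rpow_nonneg (le_refl (0:ℝ)) (3 * (q : ℝ) / ((q : ℝ) + 2))
      simpa using by positivity
    linarith
  · set S : ℝ := ∑ i, (z i * b i) ^ ((2 : ℝ) / 3) with hSdef
    have hS : 0 < S := by
      apply Finset.sum_pos
      · intro i _
        have := hz i; have := hb i
        positivity
      · exact Finset.univ_nonempty_iff.mpr (Fin.pos_iff_nonempty.mp hk)
    set e1 : ℝ := (3 * (q:ℝ) - 2) / (3 * (q:ℝ)) with he1
    set e2 : ℝ := -2 / (3 * (q:ℝ)) with he2
    set e3 : ℝ := (2 - 2 * (q:ℝ)) / ((q:ℝ) * ((q:ℝ) + 2)) with he3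
    set eexp : ℝ := 2 * (q:ℝ) / (3 * (q:ℝ) - 2) with heexp
    set α : Fin k → ℝ := fun i => z i ^ e1 * b i ^ e2 * S ^ e3 with hαdef
    have hα : ∀ i, 0 < α i := fun i => by
      have := hz i; have := hb i
      simp only [hαdef]
      positivity
    have t1 : ∀ i : Fin k, z i ^ q / α i ^ q
        = (z i * b i) ^ ((2:ℝ)/3) * S ^ ((2*(q:ℝ) - 2)/((q:ℝ)+2)) := by
      intro i
      have hzi := hz i; have hbi := hb i
      simp only [hαdef]
      rw [mul_pow, mul_pow, rpow_pow' _ hzi.le, rpow_pow' _ hbi.le, rpow_pow' _ hS.le,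
        ← Real.rpow_natCast (z i) q, Real.mul_rpow hzi.le hbi.le]
      rw [div_eq_iff (by positivity)]
      have combz : z i ^ ((2:ℝ)/3) * z i ^ (e1 * (q:ℝ)) = z i ^ ((q:ℝ)) := by
        rw [← Real.rpow_add hzi]
        congr 1
        rw [he1]; field_simp; ring
      have combb : b i ^ ((2:ℝ)/3) * b i ^ (e2 * (q:ℝ)) = 1 := by
        rw [← Real.rpow_add hbi, he2,
          show (2:ℝ)/3 + -2 / (3 * (q:ℝ)) * (q:ℝ) = 0 by field_simp; ring]
        exact Real.rpow_zero _
      have combS : S ^ ((2*(q:ℝ) - 2)/((q:ℝ)+2)) * S ^ (e3 * (q:ℝ)) = 1 := by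
        rw [← Real.rpow_add hS, he3,
          show (2*(q:ℝ) - 2)/((q:ℝ)+2) + (2 - 2 * (q:ℝ)) / ((q:ℝ) * ((q:ℝ) + 2)) * (q:ℝ) = 0 by
            field_simp; ring]
        exact Real.rpow_zero _
      exact (calc z i ^ ((2:ℝ)/3) * b i ^ ((2:ℝ)/3) * S ^ ((2*(q:ℝ) - 2)/((q:ℝ)+2)) *
            (z i ^ (e1 * (q:ℝ)) * b i ^ (e2 * (q:ℝ)) * S ^ (e3 * (q:ℝ)))
          = (z i ^ ((2:ℝ)/3) * z i ^ (e1 * (q:ℝ))) * ((b i ^ ((2:ℝ)/3) * b i ^ (e2 * (q:ℝ))) *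
            (S ^ ((2*(q:ℝ) - 2)/((q:ℝ)+2)) * S ^ (e3 * (q:ℝ)))) := by ring
        _ = z i ^ ((q:ℝ)) := by rw [combz, combb, combS]; ring).symm
    have t2 : ∀ i : Fin k, α i ^ eexp * b i ^ eexp
        = (z i * b i) ^ ((2:ℝ)/3) * S ^ (e3 * eexp) := by
      intro i
      have hzi := hz i; have hbi := hb i
      simp only [hαdef]
      rw [Real.mul_rpow (by positivity) (Real.rpow_nonneg hS.le _),
        Real.mul_rpow (by positivity) (by positivity),
        rpow_rpow' _ hzi.le, rpow_rpow' _ hbi.le, rpow_rpow' _ hS.le,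
        Real.mul_rpow hzi.le hbi.le]
      have combb : b i ^ (e2 * eexp) * b i ^ eexp = b i ^ ((2:ℝ)/3) := by
        rw [← Real.rpow_add hbi]
        congr 1
        rw [he2, heexp]; field_simp; ring
      have hze : e1 * eexp = (2:ℝ)/3 := by
        rw [he1, heexp]; field_simp
      calc z i ^ (e1 * eexp) * b i ^ (e2 * eexp) * S ^ (e3 * eexp) * b i ^ eexp
          = z i ^ (e1 * eexp) * (b i ^ (e2 * eexp) * b i ^ eexp) * S ^ (e3 * eexp) := by ring
        _ = z i ^ ((2:ℝ)/3) * b i ^ ((2:ℝ)/3) * S ^ (e3 * eexp) := by rw [combb, hze]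
    -- assemble
    have sum1 : (∑ i, z i ^ q / α i ^ q) = S ^ (3 * (q:ℝ) / ((q:ℝ) + 2)) := by
      rw [Finset.sum_congr rfl fun i _ => t1 i, ← Finset.sum_mul, ← hSdef,
        ← Real.rpow_one_add' hS.le (by
          have h0 : (0:ℝ) ≤ (2*(q:ℝ) - 2)/((q:ℝ)+2) := by
            apply div_nonneg <;> linarith
          intro hcon; linarith)]
      congr 1
      field_simp; ring
    have sum2 : (∑ i, α i ^ eexp * b i ^ eexp) ^ ((3 * (q : ℝ) - 2) / (q : ℝ))
        = S ^ (3 * (q:ℝ) / ((q:ℝ) + 2)) := by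
      rw [Finset.sum_congr rfl fun i _ => t2 i, ← Finset.sum_mul, ← hSdef,
        ← Real.rpow_one_add' hS.le (by
          rw [he3, heexp]
          intro hcon
          have : (1:ℝ) + (2 - 2 * (q:ℝ)) / ((q:ℝ) * ((q:ℝ) + 2)) * (2 * (q:ℝ) / (3 * (q:ℝ) - 2)) =
              3 * (q:ℝ)^2 / (((q:ℝ)+2) * (3*(q:ℝ)-2)) := by
              rw [div_mul_div_comm, one_add_div (by positivity), div_eq_div_iff (by positivity) (by positivity)]
              ring
          rw [this] at hcon
          have h1 : (0:ℝ) < 3 * (q:ℝ)^2 / (((q:ℝ)+2) * (3*(q:ℝ)-2)) := by positivity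
          linarith),
        rpow_rpow' _ hS.le]
      congr 1
      rw [he3, heexp]
      field_simp [(by linarith : (0:ℝ) < (q:ℝ) * 3 - 2).ne']; ring
    have hmem : S ^ (3 * (q:ℝ) / ((q:ℝ) + 2)) + S ^ (3 * (q:ℝ) / ((q:ℝ) + 2)) ∈
        {r : ℝ | ∃ α : Fin k → ℝ, (∀ i, 0 < α i) ∧
        r = (∑ i, z i ^ q / α i ^ q) +
          (∑ i, α i ^ (2 * (q : ℝ) / (3 * (q : ℝ) - 2)) *
            b i ^ (2 * (q : ℝ) / (3 * (q : ℝ) - 2))) ^ ((3 * (q : ℝ) - 2) / (q : ℝ))} := by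
      exact ⟨α, hα, by rw [← heexp] at *; rw [sum1, sum2]⟩
    have h := csInf_le hbdd hmem
    linarith
end

section
/- Let A_1,…,A_q : D → [0,1] be Lipschitz functions on a normed space D such that for each i, A_i is τ̄_i-product-Lipschitz with respect to Π_{j≠i} A_j, meaning there exist c, C > 0 such that for all x and all ν with ‖ν‖ ≤ c, |A_i(x+ν) − A_i(x)|·Π_{j≠i}A_j(x) ≤ τ̄_i‖ν‖ + C‖ν‖². Then the pointwise product Π_{i=1}^q A_i is (2Σ_i τ̄_i)-Lipschitz on D. -/
open scoped BigOperators


lemma claimB {ι : Type*} [DecidableEq ι] (f g : ι → ℝ)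
    (hf : ∀ i, f i ∈ Set.Icc (0:ℝ) 1) (hg : ∀ i, g i ∈ Set.Icc (0:ℝ) 1)
    (s : Finset ι) :
    |(∏ i ∈ s, f i) - ∏ i ∈ s, g i| ≤
      ∑ i ∈ s, |f i - g i| * ((∏ j ∈ s.erase i, g j) + ∑ j ∈ s, |f j - g j|) := by
  induction s using Finset.induction_on with
  | empty => simp
  | insert a s ha ih =>
    rw [Finset.prod_insert ha, Finset.prod_insert ha, Finset.sum_insert ha]
    have hPf0 : 0 ≤ ∏ i ∈ s, f i := Finset.prod_nonneg fun i _ => (hf i).1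
    have hPf1 : ∏ i ∈ s, f i ≤ 1 := Finset.prod_le_one (fun i _ => (hf i).1) (fun i _ => (hf i).2)
    have hPg0 : 0 ≤ ∏ i ∈ s, g i := Finset.prod_nonneg fun i _ => (hg i).1
    have hPg1 : ∏ i ∈ s, g i ≤ 1 := Finset.prod_le_one (fun i _ => (hg i).1) (fun i _ => (hg i).2)
    have key : |f a * ∏ i ∈ s, f i - g a * ∏ i ∈ s, g i| ≤
        f a * |(∏ i ∈ s, f i) - ∏ i ∈ s, g i| + |f a - g a| * ∏ i ∈ s, g i := by
      have : f a * ∏ i ∈ s, f i - g a * ∏ i ∈ s, g i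
          = f a * ((∏ i ∈ s, f i) - ∏ i ∈ s, g i) + (f a - g a) * ∏ i ∈ s, g i := by ring
      rw [this]
      refine (abs_add_le _ _).trans ?_
      rw [abs_mul, abs_mul, abs_of_nonneg (hf a).1, abs_of_nonneg hPg0]
    refine key.trans ?_
    have hDsum : 0 ≤ ∑ j ∈ s, |f j - g j| := Finset.sum_nonneg fun j _ => abs_nonneg _
    have hfa1 : f a ≤ 1 := (hf a).2
    have hfa0 : 0 ≤ f a := (hf a).1
    have hfag : f a ≤ g a + |f a - g a| := by
      have := abs_sub_abs_le_abs_sub (f a) (g a)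
      have h2 := le_abs_self (f a - g a)
      linarith
    -- bound f a * IH
    have hprod_erase : ∀ i ∈ s, ∏ j ∈ (insert a s).erase i, g j = g a * ∏ j ∈ s.erase i, g j := by
      intro i hi
      have hia : a ≠ i := fun h => ha (h ▸ hi)
      rw [Finset.erase_insert_of_ne hia, Finset.prod_insert (fun h => ha (Finset.mem_of_mem_erase h))]
    rw [Finset.sum_insert ha]
    have step1 : f a * |(∏ i ∈ s, f i) - ∏ i ∈ s, g i| ≤
        ∑ i ∈ s, |f i - g i| * ((∏ j ∈ (insert a s).erase i, g j) + (|f a - g a| + ∑ j ∈ s, |f j - g j|)) := by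
      calc f a * |(∏ i ∈ s, f i) - ∏ i ∈ s, g i|
          ≤ f a * ∑ i ∈ s, |f i - g i| * ((∏ j ∈ s.erase i, g j) + ∑ j ∈ s, |f j - g j|) :=
            mul_le_mul_of_nonneg_left ih hfa0
        _ ≤ _ := by
            rw [Finset.mul_sum]
            refine Finset.sum_le_sum fun i hi => ?_
            rw [hprod_erase i hi]
            have hPe0 : 0 ≤ ∏ j ∈ s.erase i, g j :=
              Finset.prod_nonneg fun j _ => (hg j).1
            have hPe1 : ∏ j ∈ s.erase i, g j ≤ 1 :=
              Finset.prod_le_one (fun j _ => (hg j).1) (fun j _ => (hg j).2)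
            have hga0 : 0 ≤ g a := (hg a).1
            have habs : 0 ≤ |f i - g i| := abs_nonneg _
            have habsa : 0 ≤ |f a - g a| := abs_nonneg _
            have inner : f a * ((∏ j ∈ s.erase i, g j) + ∑ j ∈ s, |f j - g j|) ≤
                g a * (∏ j ∈ s.erase i, g j) + (|f a - g a| + ∑ j ∈ s, |f j - g j|) := by
              nlinarith [mul_le_mul_of_nonneg_right hfag hPe0]
            calc f a * (|f i - g i| * ((∏ j ∈ s.erase i, g j) + ∑ j ∈ s, |f j - g j|))
                = |f i - g i| * (f a * ((∏ j ∈ s.erase i, g j) + ∑ j ∈ s, |f j - g j|)) := by ring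
              _ ≤ _ := mul_le_mul_of_nonneg_left inner habs
    have step2 : |f a - g a| * ∏ i ∈ s, g i ≤
        |f a - g a| * ((∏ j ∈ (insert a s).erase a, g j) + (|f a - g a| + ∑ j ∈ s, |f j - g j|)) := by
      rw [Finset.erase_insert ha]
      have habsa : 0 ≤ |f a - g a| := abs_nonneg _
      nlinarith
    linarith


/-- If `A_1,…,A_q : D → [0,1]` are Lipschitz and each `A_i` is `τ̄_i`-product-Lipschitz with
respect to `Π_{j≠i} A_j` (i.e. `|A_i(x+ν) − A_i(x)|·Π_{j≠i}A_j(x) ≤ τ̄_i‖ν‖ + C‖ν‖²` for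
`‖ν‖ ≤ c`), then the pointwise product `Π_i A_i` is `(2 Σ_i τ̄_i)`-Lipschitz. -/
theorem product_lipschitz {D : Type*} [NormedAddCommGroup D] [NormedSpace ℝ D]
    {q : ℕ} (A : Fin q → D → ℝ)
    (h01 : ∀ i x, A i x ∈ Set.Icc (0 : ℝ) 1)
    (hLip : ∀ i, ∃ L : NNReal, LipschitzWith L (A i))
    (τ : Fin q → ℝ)
    (hPL : ∀ i, ∃ c C : ℝ, 0 < c ∧ 0 < C ∧ ∀ (x ν : D), ‖ν‖ ≤ c →
      |A i (x + ν) - A i x| * (∏ j ∈ Finset.univ.erase i, A j x) ≤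
        τ i * ‖ν‖ + C * ‖ν‖ ^ 2) :
    ∀ x y : D, |(∏ i, A i x) - ∏ i, A i y| ≤ (2 * ∑ i, τ i) * ‖x - y‖ := by
  intro x y
  rcases eq_or_ne x y with rfl | hxy
  · simp
  rcases Nat.eq_zero_or_pos q with hq | hq
  · subst hq; simp
  have hxy' : 0 < ‖x - y‖ := by
    rw [norm_pos_iff, sub_ne_zero]; exact hxy
  choose L hL using hLip
  choose c C hc hC hstep using hPL
  -- the minimum of the c i
  have hne : (Finset.univ : Finset (Fin q)).Nonempty := ⟨⟨0, hq⟩, Finset.mem_univ _⟩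
  set δ : ℝ := Finset.univ.inf' hne c with hδdef
  have hδpos : 0 < δ := by
    rw [hδdef, Finset.lt_inf'_iff]
    exact fun i _ => hc i
  have hδle : ∀ i, δ ≤ c i := fun i => Finset.inf'_le _ (Finset.mem_univ i)
  -- τ is nonnegative
  have hτ : ∀ i, 0 ≤ τ i := by
    intro i
    by_contra h
    push_neg at h
    set ε : ℝ := min (c i) (-τ i / (2 * C i)) with hεdef
    have hεpos : 0 < ε := lt_min (hc i) (div_pos (by linarith) (by linarith [hC i]))
    set ν : D := (ε / ‖x - y‖) • (x - y) with hνdef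
    have hν : ‖ν‖ = ε := by
      rw [hνdef, norm_smul, Real.norm_eq_abs, abs_of_pos (by positivity)]
      field_simp
    have h0 : 0 ≤ |A i (x + ν) - A i x| * (∏ j ∈ Finset.univ.erase i, A j x) :=
      mul_nonneg (abs_nonneg _) (Finset.prod_nonneg fun j _ => (h01 j x).1)
    have h1 := hstep i x ν (by rw [hν]; exact min_le_left _ _)
    rw [hν] at h1
    have h2 : ε ≤ -τ i / (2 * C i) := min_le_right _ _
    have h3 : ε * (2 * C i) ≤ -τ i := by
      rw [le_div_iff₀ (by linarith [hC i] : (0:ℝ) < 2 * C i)] at h2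
      linarith
    have h4 : ε * (ε * (2 * C i)) ≤ ε * (-τ i) := mul_le_mul_of_nonneg_left h3 hεpos.le
    have h5 : 0 < C i * (ε * ε) := mul_pos (hC i) (mul_pos hεpos hεpos)
    nlinarith
  -- Lipschitz small-scale estimate
  set M : ℝ := ∑ i, (L i : ℝ) with hM
  have hM0 : 0 ≤ M := Finset.sum_nonneg fun i _ => (L i).coe_nonneg
  set K : ℝ := (∑ i, C i) + M ^ 2 with hK
  have hK0 : 0 ≤ K := by
    have : 0 ≤ ∑ i, C i := Finset.sum_nonneg fun i _ => (hC i).le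
    positivity
  have step : ∀ (z ν : D), ‖ν‖ ≤ δ →
      |(∏ i, A i (z + ν)) - ∏ i, A i z| ≤ (∑ i, τ i) * ‖ν‖ + K * ‖ν‖ ^ 2 := by
    intro z ν hνδ
    have hd : ∀ j, |A j (z + ν) - A j z| ≤ (L j : ℝ) * ‖ν‖ := by
      intro j
      have := (hL j).dist_le_mul (z + ν) z
      rwa [Real.dist_eq, dist_eq_norm, add_sub_cancel_left] at this
    have hDsum : ∑ j, |A j (z + ν) - A j z| ≤ M * ‖ν‖ := by
      rw [hM, Finset.sum_mul]
      exact Finset.sum_le_sum fun j _ => hd j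
    have hDsum0 : 0 ≤ ∑ j, |A j (z + ν) - A j z| :=
      Finset.sum_nonneg fun j _ => abs_nonneg _
    have hB := claimB (fun i => A i (z + ν)) (fun i => A i z)
      (fun i => h01 i (z + ν)) (fun i => h01 i z) Finset.univ
    refine hB.trans ?_
    have hsplit : ∑ i, |A i (z + ν) - A i z| *
        ((∏ j ∈ Finset.univ.erase i, A j z) + ∑ j, |A j (z + ν) - A j z|)
        = (∑ i, |A i (z + ν) - A i z| * ∏ j ∈ Finset.univ.erase i, A j z)
          + (∑ i, |A i (z + ν) - A i z|) * (∑ j, |A j (z + ν) - A j z|) := by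
      rw [Finset.sum_mul]
      rw [← Finset.sum_add_distrib]
      exact Finset.sum_congr rfl fun i _ => by ring
    rw [hsplit]
    have hterm : (∑ i, |A i (z + ν) - A i z| * ∏ j ∈ Finset.univ.erase i, A j z)
        ≤ ∑ i, (τ i * ‖ν‖ + C i * ‖ν‖ ^ 2) :=
      Finset.sum_le_sum fun i _ => hstep i z ν (hνδ.trans (hδle i))
    have hsq : (∑ i, |A i (z + ν) - A i z|) * (∑ j, |A j (z + ν) - A j z|)
        ≤ (M * ‖ν‖) * (M * ‖ν‖) :=
      mul_le_mul hDsum hDsum hDsum0 (by positivity)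
    have : ∑ i, (τ i * ‖ν‖ + C i * ‖ν‖ ^ 2) = (∑ i, τ i) * ‖ν‖ + (∑ i, C i) * ‖ν‖ ^ 2 := by
      rw [Finset.sum_add_distrib, Finset.sum_mul, Finset.sum_mul]
    rw [this] at hterm
    have : (M * ‖ν‖) * (M * ‖ν‖) = M ^ 2 * ‖ν‖ ^ 2 := by ring
    rw [this] at hsq
    have hKexp : K * ‖ν‖ ^ 2 = (∑ i, C i) * ‖ν‖ ^ 2 + M ^ 2 * ‖ν‖ ^ 2 := by
      rw [hK]; ring
    linarith
  -- subdivision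
  have subdiv : ∀ n : ℕ, 0 < n → ‖x - y‖ / n ≤ δ →
      |(∏ i, A i x) - ∏ i, A i y| ≤ (∑ i, τ i) * ‖x - y‖ + K * ‖x - y‖ ^ 2 / n := by
    intro n hn hnδ
    have hn' : (0:ℝ) < n := Nat.cast_pos.mpr hn
    set ν : D := ((1:ℝ) / n) • (x - y) with hνdef
    have hν : ‖ν‖ = ‖x - y‖ / n := by
      rw [hνdef, norm_smul, Real.norm_eq_abs, abs_of_pos (by positivity)]
      ring
    set w : ℕ → D := fun k => y + ((k : ℝ) / n) • (x - y) with hw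
    have hw0 : w 0 = y := by simp [hw]
    have hwn : w n = x := by
      simp only [hw]
      rw [div_self hn'.ne', one_smul]
      abel
    have hwsucc : ∀ k : ℕ, w (k + 1) = w k + ν := by
      intro k
      simp only [hw, hνdef]
      have : ((k + 1 : ℕ) : ℝ) / n = (k : ℝ) / n + 1 / n := by
        push_cast; ring
      rw [this, add_smul, add_assoc]
    set F : ℕ → ℝ := fun k => ∏ i, A i (w k) with hF
    have htel : F n - F 0 = ∑ k ∈ Finset.range n, (F (k + 1) - F k) :=
      (Finset.sum_range_sub F n).symm
    have hstep' : ∀ k, |F (k + 1) - F k| ≤ (∑ i, τ i) * ‖ν‖ + K * ‖ν‖ ^ 2 := by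
      intro k
      have := step (w k) ν (by rw [hν]; exact hnδ)
      rwa [← hwsucc k] at this
    calc |(∏ i, A i x) - ∏ i, A i y| = |F n - F 0| := by rw [hF]; simp [hw0, hwn]
      _ = |∑ k ∈ Finset.range n, (F (k + 1) - F k)| := by rw [htel]
      _ ≤ ∑ k ∈ Finset.range n, |F (k + 1) - F k| := Finset.abs_sum_le_sum_abs _ _
      _ ≤ ∑ _k ∈ Finset.range n, ((∑ i, τ i) * ‖ν‖ + K * ‖ν‖ ^ 2) :=
          Finset.sum_le_sum fun k _ => hstep' k
      _ = n * ((∑ i, τ i) * ‖ν‖ + K * ‖ν‖ ^ 2) := by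
          rw [Finset.sum_const, Finset.card_range, nsmul_eq_mul]
      _ = (∑ i, τ i) * ‖x - y‖ + K * ‖x - y‖ ^ 2 / n := by
          rw [hν]; field_simp
  -- conclude
  have hfinal : |(∏ i, A i x) - ∏ i, A i y| ≤ (∑ i, τ i) * ‖x - y‖ := by
    refine le_of_forall_pos_le_add fun ε hε => ?_
    obtain ⟨n, hnbig⟩ := exists_nat_gt (max (‖x - y‖ / δ) (K * ‖x - y‖ ^ 2 / ε))
    have h1 : ‖x - y‖ / δ < n := lt_of_le_of_lt (le_max_left _ _) hnbig
    have h2 : K * ‖x - y‖ ^ 2 / ε < n := lt_of_le_of_lt (le_max_right _ _) hnbig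
    have hn0 : 0 < n := by
      by_contra h
      push_neg at h
      interval_cases n
      simp only [Nat.cast_zero] at h1
      have : 0 < ‖x - y‖ / δ := div_pos hxy' hδpos
      linarith
    have hn' : (0:ℝ) < n := Nat.cast_pos.mpr hn0
    have hA : ‖x - y‖ / n ≤ δ := by
      rw [div_le_iff₀ hn']
      rw [div_lt_iff₀ hδpos] at h1
      linarith
    have hB : K * ‖x - y‖ ^ 2 / n ≤ ε := by
      rw [div_le_iff₀ hn']
      rw [div_lt_iff₀ hε] at h2
      linarith
    exact (subdiv n hn0 hA).trans (by linarith)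
  have hτsum : 0 ≤ ∑ i, τ i := Finset.sum_nonneg fun i _ => hτ i
  nlinarith [hxy'.le]
end
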